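/- Suppose there are constants K₁, C̄, c, ‖u₀‖_∞ such that a nonnegative function u : ℝ × [0,∞) → ℝ satisfies: (i) u(x,t) ≤ e^{-(t-t̄)}‖u₀‖_∞ + C̄ (t - t̄)^{-1/2} M(t̄) for all 0 < t̄ < t, where M(t̄) = ∫ u(·,t̄); (ii) M(t) ≤ K₁ ‖u(·,t)‖_∞^{1/2} for all t; (iii) ‖u(·,t)‖_∞ ≤ C₀ t^{-1/2} for t ≥ 1/2 with C₀ ≥ 1. Then there is a constant C with ‖u(·,t)‖_∞ ≤ C t^{-1} for all t ≥ 1/2. (Iterative decay improvement: with α_k = 1 - 2^{-(k+1)}, t_k = 2^{k-1}, there is a bounded nondecreasing sequence C_k with ‖u(·,t)‖_∞ ≤ C_k t^{-α_k} for t ≥ t_k.) -/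

import Mathlib

open Real MeasureTheory Set Filter

theorem iterative_decay_bootstrap
    (u : ℝ → ℝ → ℝ) (K₁ Cbar c U₀ C₀ : ℝ)
    (hupos : ∀ x t, 0 ≤ u x t)
    (hK₁ : 0 ≤ K₁) (hCbar : 0 ≤ Cbar) (hc : 0 ≤ c) (hU₀ : 0 ≤ U₀)
    (hC₀ : 1 ≤ C₀)
    -- (i) Duhamel-type estimate
    (hi : ∀ x : ℝ, ∀ tb t : ℝ, 0 < tb → tb < t →
      u x t ≤ Real.exp (-(t - tb)) * U₀ +
        Cbar * (t - tb) ^ (-(1/2) : ℝ) * ∫ y, u y tb)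
    -- (ii) mass controlled by sup
    (hii : ∀ t : ℝ, 0 < t → (∫ y, u y t) ≤ K₁ * Real.sqrt (⨆ x, u x t))
    -- (iii) initial half-rate decay
    (hiii : ∀ t : ℝ, 1/2 ≤ t → (⨆ x, u x t) ≤ C₀ * t ^ (-(1/2) : ℝ)) :
    ∃ C : ℝ, ∀ t : ℝ, 1/2 ≤ t → ∀ x : ℝ, u x t ≤ C * t⁻¹ := by
  set S : ℝ := 2*U₀ + 2*Cbar*K₁ + C₀ + 1 with hSdef
  have hS1 : 1 ≤ S := by nlinarith
  have hS0 : 0 ≤ S := by linarith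
  set D : ℝ := S^2 with hDdef
  have hD0 : 0 ≤ D := sq_nonneg S
  have hsqrtD : Real.sqrt D = S := Real.sqrt_sq hS0
  have hC₀D : C₀ ≤ D := by nlinarith
  -- boundedness of u(·,t) for t > 0
  have hbdd : ∀ t : ℝ, 0 < t → BddAbove (Set.range fun x => u x t) := by
    intro t ht
    refine ⟨Real.exp (-(t - t/2)) * U₀ + Cbar * (t - t/2) ^ (-(1/2):ℝ) * ∫ y, u y (t/2), ?_⟩
    rintro _ ⟨x, rfl⟩
    exact hi x (t/2) t (by linarith) (by linarith)
  have hle_sup : ∀ x t : ℝ, 0 < t → u x t ≤ ⨆ x, u x t :=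
    fun x t ht => le_ciSup (hbdd t ht) x
  -- the exponents
  set α : ℕ → ℝ := fun k => 1 - (1/2:ℝ)^(k+1) with hαdef
  have hα_le : ∀ k, α k ≤ 1 := by
    intro k
    have : (0:ℝ) < (1/2:ℝ)^(k+1) := by positivity
    simp only [hαdef]; linarith
  have hα_half : ∀ k, (1/2:ℝ) ≤ α k := by
    intro k
    have : (1/2:ℝ)^(k+1) ≤ (1/2:ℝ)^1 :=
      pow_le_pow_of_le_one (by norm_num) (by norm_num) (Nat.le_add_left 1 k)
    simp only [hαdef]
    norm_num at this ⊢
    linarith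
  -- main induction
  have H : ∀ k : ℕ, ∀ t : ℝ, (2:ℝ)^k / 2 ≤ t → (⨆ x, u x t) ≤ D * t ^ (-α k) := by
    intro k
    induction k with
    | zero =>
      intro t ht
      norm_num at ht
      have hα0 : α 0 = 1/2 := by norm_num [hαdef]
      have h1 := hiii t ht
      have h2 : C₀ * t ^ (-(1/2):ℝ) ≤ D * t ^ (-(1/2):ℝ) :=
        mul_le_mul_of_nonneg_right hC₀D (Real.rpow_nonneg (by linarith) _)
      rw [hα0]
      exact h1.trans h2
    | succ k ih =>
      intro t ht
      have h2k : (1:ℝ) ≤ (2:ℝ)^k := one_le_pow₀ (by norm_num)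
      have ht1 : (2:ℝ)^k ≤ t := by
        rw [pow_succ] at ht; linarith
      have h1t : (1:ℝ) ≤ t := h2k.trans ht1
      have ht0 : (0:ℝ) < t := by linarith
      have htb0 : (0:ℝ) < t/2 := by linarith
      have htb : (2:ℝ)^k / 2 ≤ t/2 := by linarith
      set β : ℝ := α (k+1) with hβdef
      have hβ1 : β ≤ 1 := hα_le (k+1)
      have hβ0 : 0 < β := lt_of_lt_of_le (by norm_num) (hα_half (k+1))
      have htβ : 0 ≤ t ^ (-β) := Real.rpow_nonneg ht0.le _
      -- pointwise bound
      have key : ∀ x : ℝ, u x t ≤ D * t ^ (-β) := by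
        intro x
        have h1 := hi x (t/2) t htb0 (by linarith)
        rw [show t - t/2 = t/2 by ring] at h1
        -- bound the integral
        have hsup : Real.sqrt (⨆ x, u x (t/2)) ≤ S * (t/2) ^ (-(α k)/2) := by
          have h3 : (⨆ x, u x (t/2)) ≤ D * (t/2) ^ (-α k) := ih (t/2) htb
          calc Real.sqrt (⨆ x, u x (t/2)) ≤ Real.sqrt (D * (t/2) ^ (-α k)) :=
                Real.sqrt_le_sqrt h3
            _ = S * (t/2) ^ (-(α k)/2) := by
                rw [Real.sqrt_mul hD0, hsqrtD, Real.sqrt_eq_rpow,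
                  ← Real.rpow_mul htb0.le]
                ring_nf
        have hint : (∫ y, u y (t/2)) ≤ K₁ * (S * (t/2) ^ (-(α k)/2)) :=
          (hii (t/2) htb0).trans
            (mul_le_mul_of_nonneg_left hsup hK₁)
        have h4 : u x t ≤ Real.exp (-(t/2)) * U₀ +
            Cbar * (t/2) ^ (-(1/2):ℝ) * (K₁ * (S * (t/2) ^ (-(α k)/2))) := by
          refine h1.trans (add_le_add_right ?_ _)
          have : 0 ≤ Cbar * (t/2) ^ (-(1/2):ℝ) := by positivity
          exact mul_le_mul_of_nonneg_left hint this
        -- combine the rpow's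
        have hcomb : (t/2) ^ (-(1/2):ℝ) * (t/2) ^ (-(α k)/2) = (t/2) ^ (-β) := by
          rw [← Real.rpow_add htb0]
          congr 1
          have : α (k+1) = 1 - (1/2:ℝ)^(k+1)/2 * 1 := by
            simp only [hαdef]; rw [pow_succ]; ring
          simp only [hβdef, hαdef] at *
          ring
        -- bound (t/2)^(-β) ≤ 2 * t^(-β)
        have hhalf : (t/2) ^ (-β) ≤ 2 * t ^ (-β) := by
          have e1 : (t/2) ^ (-β) = t ^ (-β) * ((2:ℝ)⁻¹) ^ (-β) := by
            rw [show t/2 = t * 2⁻¹ by ring, Real.mul_rpow ht0.le (by norm_num)]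
          have e2 : ((2:ℝ)⁻¹) ^ (-β) = (2:ℝ) ^ β := by
            rw [← Real.rpow_neg_one 2, ← Real.rpow_mul (by norm_num)]
            norm_num
          have e3 : (2:ℝ) ^ β ≤ 2 := by
            calc (2:ℝ) ^ β ≤ (2:ℝ) ^ (1:ℝ) :=
                  Real.rpow_le_rpow_of_exponent_le one_le_two hβ1
              _ = 2 := Real.rpow_one 2
          rw [e1, e2]
          calc t ^ (-β) * (2:ℝ) ^ β ≤ t ^ (-β) * 2 :=
                mul_le_mul_of_nonneg_left e3 htβ
            _ = 2 * t ^ (-β) := by ring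
        -- bound exp(-(t/2)) ≤ 2 * t^(-β)
        have hexp : Real.exp (-(t/2)) ≤ 2 * t ^ (-β) := by
          have e1 : Real.exp (-(t/2)) ≤ (t/2)⁻¹ := by
            rw [Real.exp_neg]
            refine inv_anti₀ htb0 ?_
            have := Real.add_one_le_exp (t/2)
            linarith
          have e2 : (t/2)⁻¹ = 2 * t ^ ((-1:ℝ)) := by
            rw [Real.rpow_neg_one]
            field_simp
          have e3 : t ^ ((-1:ℝ)) ≤ t ^ (-β) :=
            Real.rpow_le_rpow_of_exponent_le h1t (by linarith)
          calc Real.exp (-(t/2)) ≤ (t/2)⁻¹ := e1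
            _ = 2 * t ^ ((-1:ℝ)) := e2
            _ ≤ 2 * t ^ (-β) := by linarith
        calc u x t
            ≤ Real.exp (-(t/2)) * U₀ +
              Cbar * (t/2) ^ (-(1/2):ℝ) * (K₁ * (S * (t/2) ^ (-(α k)/2))) := h4
          _ = U₀ * Real.exp (-(t/2)) +
              (Cbar*K₁*S) * ((t/2) ^ (-(1/2):ℝ) * (t/2) ^ (-(α k)/2)) := by ring
          _ = U₀ * Real.exp (-(t/2)) + (Cbar*K₁*S) * (t/2) ^ (-β) := by rw [hcomb]
          _ ≤ U₀ * (2 * t ^ (-β)) + (Cbar*K₁*S) * (2 * t ^ (-β)) :=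
              add_le_add (mul_le_mul_of_nonneg_left hexp hU₀)
                (mul_le_mul_of_nonneg_left hhalf (by positivity))
          _ = (2*U₀ + 2*(Cbar*K₁*S)) * t ^ (-β) := by ring
          _ ≤ D * t ^ (-β) := by
              refine mul_le_mul_of_nonneg_right ?_ htβ
              have hb : 0 ≤ 2*Cbar*K₁ := by positivity
              nlinarith [mul_nonneg hb (sub_nonneg.2 hS1), mul_nonneg hU₀ (sub_nonneg.2 hS1)]
      calc (⨆ x, u x t) ≤ D * t ^ (-β) := ciSup_le key
        _ = D * t ^ (-α (k+1)) := rfl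
  -- conclude
  refine ⟨2*D, fun t ht x => ?_⟩
  have ht0 : (0:ℝ) < t := by linarith
  have hinv0 : (0:ℝ) ≤ t⁻¹ := by positivity
  rcases lt_or_ge t 1 with h1 | h1
  · have h2 := (hle_sup x t ht0).trans (H 0 t (by norm_num; exact ht))
    have hα0 : α 0 = 1/2 := by norm_num [hαdef]
    rw [hα0] at h2
    have h3 : t ^ (-(1/2):ℝ) ≤ t ^ ((-1:ℝ)) :=
      Real.rpow_le_rpow_of_exponent_ge ht0 h1.le (by norm_num)
    rw [Real.rpow_neg_one] at h3
    calc u x t ≤ D * t ^ (-(1/2):ℝ) := h2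
      _ ≤ D * t⁻¹ := mul_le_mul_of_nonneg_left h3 hD0
      _ ≤ 2*D * t⁻¹ := by nlinarith
  · obtain ⟨k, hk1, hk2⟩ := exists_nat_pow_near (show (1:ℝ) ≤ 2*t by linarith) one_lt_two
    have hk1' : (2:ℝ)^k / 2 ≤ t := by linarith
    have h2 := (hle_sup x t ht0).trans (H k t hk1')
    have htk : t ≤ (2:ℝ)^k := by
      rw [pow_succ] at hk2; linarith
    set e : ℝ := (1/2:ℝ)^(k+1) with hedef
    have he0 : (0:ℝ) ≤ e := by positivity
    have hsplit : t ^ (-α k) = t ^ ((-1:ℝ)) * t ^ e := by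
      rw [← Real.rpow_add ht0]
      congr 1
      simp only [hαdef, hedef]
      ring
    have hte : t ^ e ≤ 2 := by
      have s1 : t ^ e ≤ ((2:ℝ)^k) ^ e :=
        Real.rpow_le_rpow ht0.le htk he0
      have s2 : ((2:ℝ)^k) ^ e = (2:ℝ) ^ ((k:ℝ) * e) := by
        rw [← Real.rpow_natCast 2 k, ← Real.rpow_mul (by norm_num)]
      have s3 : (k:ℝ) * e ≤ 1 := by
        have hk2p : (k:ℝ) ≤ (2:ℝ)^(k+1) := by
          have := (Nat.lt_two_pow_self (n := k)).le.trans (Nat.pow_le_pow_right (by norm_num) (Nat.le_succ k))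
          exact_mod_cast this
        have he : e = ((2:ℝ)^(k+1))⁻¹ := by
          simp only [hedef]
          rw [one_div, inv_pow]
        rw [he, ← div_eq_mul_inv, div_le_one (by positivity)]
        exact hk2p
      have s4 : (2:ℝ) ^ ((k:ℝ)*e) ≤ (2:ℝ) ^ (1:ℝ) :=
        Real.rpow_le_rpow_of_exponent_le one_le_two s3
      rw [Real.rpow_one] at s4
      rw [s2] at s1
      exact s1.trans s4
    calc u x t ≤ D * t ^ (-α k) := h2
      _ = D * (t ^ ((-1:ℝ)) * t ^ e) := by rw [hsplit]
      _ ≤ D * (t ^ ((-1:ℝ)) * 2) :=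
          mul_le_mul_of_nonneg_left
            (mul_le_mul_of_nonneg_left hte (Real.rpow_nonneg ht0.le _)) hD0
      _ = 2*D * t⁻¹ := by rw [Real.rpow_neg_one]; ring
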